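/- If 0 < ν ≤ μ are reals and t ≥ a are integers, then H_ν(t, a) ≤ H_μ(t, a), where H_μ(t,a) = Γ(t-a+μ)/(Γ(t-a)Γ(μ+1)). -/
import Mathlib


noncomputable def H (μ : ℝ) (t a : ℤ) : ℝ :=
  Real.Gamma ((t : ℝ) - a + μ) / (Real.Gamma ((t : ℝ) - a) * Real.Gamma (μ + 1))

lemma Gamma_nat_add (m : ℕ) (μ : ℝ) (hμ : 0 < μ) :
    Real.Gamma ((m : ℝ) + 1 + μ) = (∏ k ∈ Finset.range m, ((k : ℝ) + 1 + μ)) * Real.Gamma (1 + μ) := by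
  induction m with
  | zero => simp
  | succ n ih =>
    have h : ((n : ℝ) + 1) + 1 + μ = ((n : ℝ) + 1 + μ) + 1 := by ring
    rw [Nat.cast_succ, h, Real.Gamma_add_one (by positivity), Finset.prod_range_succ, ih]
    ring

lemma H_eq (μ : ℝ) (hμ : 0 < μ) (m : ℕ) (a t : ℤ) (h : (t : ℝ) - a = (m : ℝ) + 1) :
    H μ t a = (∏ k ∈ Finset.range m, ((k : ℝ) + 1 + μ)) / (m.factorial : ℝ) := by
  rw [H, h, Gamma_nat_add m μ hμ]
  rw [Real.Gamma_nat_eq_factorial]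
  rw [add_comm 1 μ, mul_div_mul_right _ _ (Real.Gamma_pos_of_pos (by positivity : (0:ℝ) < μ + 1)).ne']

theorem H_mono_in_order (ν μ : ℝ) (hν : 0 < ν) (hνμ : ν ≤ μ) (a t : ℤ) (ht : a ≤ t) :
    H ν t a ≤ H μ t a := by
  rcases eq_or_lt_of_le ht with h | h
  · subst h
    simp [H, Real.Gamma_zero]
  · obtain ⟨m, hm⟩ : ∃ m : ℕ, t - a = (m : ℤ) + 1 := by
      refine ⟨(t - a - 1).toNat, ?_⟩
      omega
    have hc : (t : ℝ) - a = (m : ℝ) + 1 := by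
      have := congrArg (Int.cast : ℤ → ℝ) hm
      push_cast at this ⊢
      linarith
    rw [H_eq ν hν m a t hc, H_eq μ (lt_of_lt_of_le hν hνμ) m a t hc]
    gcongr with k hk
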